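/- arXiv:2106.04949 — 3 statements merged into one kernel-verified Lean document; each statement's English description precedes it below -/
import Mathlib

section
/- Let Δt > 0 and let w_{n-1}, w_n, w_{n+1} be elements of a real inner product space. Then ((3/2·w_{n+1} − 2·w_n + 1/2·w_{n−1})/Δt, 3/2·w_{n+1} − w_n + 1/2·w_{n−1}) = (1/Δt)·‖[w_{n+1}; w_n]‖_G² − (1/Δt)·‖[w_n; w_{n−1}]‖_G² + (1/(4Δt))·‖w_{n+1} − 2w_n + w_{n−1}‖_F², where ‖[u;v]‖_G² = (3/2)‖u‖² − (3/2)(u,v) + (1/2)‖v‖² and ‖w‖_F² = 3‖w‖². -/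
/-- the G-norm / F-norm identity for the filtered scheme:
`((3/2 w_{n+1} − 2 w_n + 1/2 w_{n−1})/Δt , 3/2 w_{n+1} − w_n + 1/2 w_{n−1})
 = (1/Δt)‖[w_{n+1};w_n]‖_G² − (1/Δt)‖[w_n;w_{n−1}]‖_G² + (1/(4Δt))‖w_{n+1}−2w_n+w_{n−1}‖_F²`
with `‖[u;v]‖_G² = (3/2)‖u‖² − (3/2)(u,v) + (1/2)‖v‖²` and `‖w‖_F² = 3‖w‖²`. -/
theorem stmt_3 {H : Type*} [NormedAddCommGroup H] [InnerProductSpace ℝ H]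
    (Δt : ℝ) (hΔt : 0 < Δt) (wm w0 w1 : H) :
    (inner ℝ (Δt⁻¹ • ((3 / 2 : ℝ) • w1 - (2 : ℝ) • w0 + (1 / 2 : ℝ) • wm))
        ((3 / 2 : ℝ) • w1 - w0 + (1 / 2 : ℝ) • wm) : ℝ)
      = (1 / Δt) * ((3 / 2) * ‖w1‖ ^ 2 - (3 / 2) * (inner ℝ w1 w0 : ℝ) + (1 / 2) * ‖w0‖ ^ 2)
        - (1 / Δt) * ((3 / 2) * ‖w0‖ ^ 2 - (3 / 2) * (inner ℝ w0 wm : ℝ) + (1 / 2) * ‖wm‖ ^ 2)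
        + (1 / (4 * Δt)) * (3 * ‖w1 - (2 : ℝ) • w0 + wm‖ ^ 2) := by
  simp only [← real_inner_self_eq_norm_sq, inner_add_add_self, inner_sub_sub_self,
    inner_add_left, inner_add_right, inner_sub_left, inner_sub_right,
    real_inner_smul_left, real_inner_smul_right, real_inner_comm w0 w1,
    real_inner_comm wm w0, real_inner_comm wm w1]
  field_simp
  ring
end

section
/- In dimension d = 2 or 3, for the EMAC trilinear form c(u,v,w) = 2(D(u)v, w) + ((∇·u)v, w), any constant vector e ∈ R^d, the rotational field φ(x) = x × e, and any smooth compactly supported u on Ω, one has c(u, u, φ) = 0. -/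
open MeasureTheory

noncomputable def phiCLM (e : Fin 3 → ℝ) : (Fin 3 → ℝ) →L[ℝ] (Fin 3 → ℝ) :=
  LinearMap.toContinuousLinearMap ((crossProduct (R := ℝ)).flip e)

lemma hphi_hasFDerivAt (e : Fin 3 → ℝ) (i : Fin 3) (x : Fin 3 → ℝ) :
    HasFDerivAt (fun y : Fin 3 → ℝ => crossProduct y e i)
      ((ContinuousLinearMap.proj i : (Fin 3 → ℝ) →L[ℝ] ℝ).comp (phiCLM e)) x :=
  ((ContinuousLinearMap.proj i : (Fin 3 → ℝ) →L[ℝ] ℝ).hasFDerivAt).comp x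
    (phiCLM e).hasFDerivAt

lemma hphi_fderiv (e : Fin 3 → ℝ) (i : Fin 3) (x w : Fin 3 → ℝ) :
    fderiv ℝ (fun y : Fin 3 → ℝ => crossProduct y e i) x w = crossProduct w e i := by
  rw [(hphi_hasFDerivAt e i x).fderiv]; rfl

lemma hphi_contDiff (e : Fin 3 → ℝ) (i : Fin 3) :
    ContDiff ℝ 1 (fun y : Fin 3 → ℝ => crossProduct y e i) :=
  ((ContinuousLinearMap.proj i : (Fin 3 → ℝ) →L[ℝ] ℝ).comp (phiCLM e)).contDiff

lemma fd_mul {f g : (Fin 3 → ℝ) → ℝ} {x : Fin 3 → ℝ}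
    (hf : DifferentiableAt ℝ f x) (hg : DifferentiableAt ℝ g x) (w : Fin 3 → ℝ) :
    fderiv ℝ (fun y => f y * g y) x w
      = fderiv ℝ f x w * g x + f x * fderiv ℝ g x w := by
  rw [fderiv_fun_mul hf hg]
  simp only [ContinuousLinearMap.add_apply, ContinuousLinearMap.smul_apply, smul_eq_mul]
  ring

lemma fd_add {f g : (Fin 3 → ℝ) → ℝ} {x : Fin 3 → ℝ}
    (hf : DifferentiableAt ℝ f x) (hg : DifferentiableAt ℝ g x) (w : Fin 3 → ℝ) :
    fderiv ℝ (fun y => f y + g y) x w = fderiv ℝ f x w + fderiv ℝ g x w := by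
  rw [fderiv_fun_add hf hg]; rfl

lemma fd_const_mul {f : (Fin 3 → ℝ) → ℝ} {x : Fin 3 → ℝ}
    (hf : DifferentiableAt ℝ f x) (c : ℝ) (w : Fin 3 → ℝ) :
    fderiv ℝ (fun y => c * f y) x w = c * fderiv ℝ f x w := by
  rw [fderiv_const_mul hf c]
  simp

-- the divergence-field components
noncomputable def Ffun (u : (Fin 3 → ℝ) → (Fin 3 → ℝ)) (e : Fin 3 → ℝ) (j : Fin 3) :
    (Fin 3 → ℝ) → ℝ :=
  fun y => u y j * (∑ i, u y i * crossProduct y e i)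
    + (1/2) * ((∑ i, u y i * u y i) * crossProduct y e j)

lemma u_comp_contDiff {u : (Fin 3 → ℝ) → (Fin 3 → ℝ)} (hu : ContDiff ℝ 1 u) (i : Fin 3) :
    ContDiff ℝ 1 (fun y => u y i) :=
  (ContinuousLinearMap.proj i : (Fin 3 → ℝ) →L[ℝ] ℝ).contDiff.comp hu

lemma Ffun_contDiff {u : (Fin 3 → ℝ) → (Fin 3 → ℝ)} (e : Fin 3 → ℝ)
    (hu : ContDiff ℝ 1 u) (j : Fin 3) : ContDiff ℝ 1 (Ffun u e j) := by
  unfold Ffun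
  exact ((u_comp_contDiff hu j).mul
      (ContDiff.sum fun i _ => (u_comp_contDiff hu i).mul (hphi_contDiff e i))).add
    (contDiff_const.mul ((ContDiff.sum fun i _ =>
      (u_comp_contDiff hu i).mul (u_comp_contDiff hu i)).mul (hphi_contDiff e j)))

lemma Ffun_support {u : (Fin 3 → ℝ) → (Fin 3 → ℝ)} (e : Fin 3 → ℝ)
    (hus : HasCompactSupport u) (j : Fin 3) : HasCompactSupport (Ffun u e j) := by
  apply HasCompactSupport.intro hus
  intro x hx
  have h0 : u x = 0 := image_eq_zero_of_notMem_tsupport hx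
  simp [Ffun, h0]

-- integrability of directional derivative of a C¹ compactly supported function
lemma aux_integrable_fderiv (f : (Fin 3 → ℝ) → ℝ) (hf : ContDiff ℝ 1 f)
    (hfs : HasCompactSupport f) (v : Fin 3 → ℝ) :
    Integrable (fun x : Fin 3 → ℝ => fderiv ℝ f x v) := by
  apply Continuous.integrable_of_hasCompactSupport
  · exact (hf.continuous_fderiv one_ne_zero).clm_apply continuous_const
  · exact (hfs.fderiv ℝ).comp_left (g := fun L : (Fin 3 → ℝ) →L[ℝ] ℝ => L v) rfl

-- integral of a directional derivative of a C¹ compactly supported function is 0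
lemma aux_int_fderiv_zero (f : (Fin 3 → ℝ) → ℝ) (hf : ContDiff ℝ 1 f)
    (hfs : HasCompactSupport f) (v : Fin 3 → ℝ) :
    ∫ x : Fin 3 → ℝ, fderiv ℝ f x v = 0 := by
  have h := integral_mul_fderiv_eq_neg_fderiv_mul_of_integrable
    (f := fun _ : Fin 3 → ℝ => (1:ℝ)) (g := f) (v := v)
    (by simpa using (integrable_zero _ _ (volume : Measure (Fin 3 → ℝ))))
    (by simpa using aux_integrable_fderiv f hf hfs v)
    (by simpa using hf.continuous.integrable_of_hasCompactSupport hfs)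
    (fun x _ => differentiableAt_const _) (fun x _ => hf.differentiable one_ne_zero x)
  simpa using h

-- the pointwise divergence identity
lemma pointwise_identity (u : (Fin 3 → ℝ) → (Fin 3 → ℝ)) (e : Fin 3 → ℝ)
    (hu : ContDiff ℝ 1 u) (x : Fin 3 → ℝ) :
    2 * (∑ i,
        (∑ j, ((fderiv ℝ (fun y => u y i) x (Pi.single j 1)
            + fderiv ℝ (fun y => u y j) x (Pi.single i 1)) / 2) * u x j)
          * (crossProduct x e) i)
      + (∑ j, fderiv ℝ (fun y => u y j) x (Pi.single j 1))
          * (∑ i, u x i * (crossProduct x e) i)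
      = ∑ j : Fin 3, fderiv ℝ (Ffun u e j) x (Pi.single j 1) := by
  have hd : ∀ i, DifferentiableAt ℝ (fun y => u y i) x :=
    fun i => ((u_comp_contDiff hu i).differentiable one_ne_zero) x
  have hdφ : ∀ i, DifferentiableAt ℝ (fun y : Fin 3 → ℝ => crossProduct y e i) x :=
    fun i => (hphi_hasFDerivAt e i x).differentiableAt
  have hS : DifferentiableAt ℝ (fun y => ∑ i, u y i * crossProduct y e i) x :=
    DifferentiableAt.fun_sum fun i _ => (hd i).mul (hdφ i)
  have hQ : DifferentiableAt ℝ (fun y => ∑ i, u y i * u y i) x :=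
    DifferentiableAt.fun_sum fun i _ => (hd i).mul (hd i)
  have hSd : ∀ w, fderiv ℝ (fun y => ∑ i, u y i * crossProduct y e i) x w
      = ∑ i, (fderiv ℝ (fun y => u y i) x w * crossProduct x e i
          + u x i * crossProduct w e i) := by
    intro w
    rw [fderiv_fun_sum fun i _ => (hd i).fun_mul (hdφ i), ContinuousLinearMap.sum_apply]
    exact Finset.sum_congr rfl fun i _ => by rw [fd_mul (hd i) (hdφ i), hphi_fderiv]
  have hQd : ∀ w, fderiv ℝ (fun y => ∑ i, u y i * u y i) x w
      = ∑ i, (fderiv ℝ (fun y => u y i) x w * u x i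
          + u x i * fderiv ℝ (fun y => u y i) x w) := by
    intro w
    rw [fderiv_fun_sum fun i _ => (hd i).fun_mul (hd i), ContinuousLinearMap.sum_apply]
    exact Finset.sum_congr rfl fun i _ => by rw [fd_mul (hd i) (hd i)]
  have hFj : ∀ j, fderiv ℝ (Ffun u e j) x (Pi.single j 1)
      = fderiv ℝ (fun y => u y j) x (Pi.single j 1) * (∑ i, u x i * crossProduct x e i)
        + u x j * (∑ i, (fderiv ℝ (fun y => u y i) x (Pi.single j 1) * crossProduct x e i
            + u x i * crossProduct (Pi.single j 1) e i))
        + (1/2) * ((∑ i, (fderiv ℝ (fun y => u y i) x (Pi.single j 1) * u x i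
            + u x i * fderiv ℝ (fun y => u y i) x (Pi.single j 1))) * crossProduct x e j
          + (∑ i, u x i * u x i) * crossProduct (Pi.single j 1) e j) := by
    intro j
    unfold Ffun
    rw [fd_add ((hd j).fun_mul hS) (differentiableAt_const _ |>.fun_mul (hQ.fun_mul (hdφ j))),
      fd_mul (hd j) hS, fd_const_mul (hQ.fun_mul (hdφ j)), fd_mul hQ (hdφ j),
      hSd, hQd, hphi_fderiv]
  simp only [hFj]
  simp only [Fin.sum_univ_three, crossProduct, LinearMap.mk₂_apply, Matrix.cons_val_zero,
    Matrix.cons_val_one, Matrix.head_cons, Matrix.cons_val_two, Matrix.tail_cons,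
    Pi.single_eq_same, ne_eq, Pi.single_eq_of_ne]
  simp [Pi.single_apply]
  ring

open MeasureTheory in
/-- angular momentum conservation of the EMAC nonlinearity:
`c(u, u, φ) = 0` for `φ(x) = x × e` and smooth compactly supported `u` in 3D. -/
theorem stmt_10 (u : (Fin 3 → ℝ) → (Fin 3 → ℝ)) (e : Fin 3 → ℝ)
    (hu : ContDiff ℝ 1 u) (hus : HasCompactSupport u) :
    2 * (∫ x : Fin 3 → ℝ, ∑ i,
        (∑ j, ((fderiv ℝ (fun y => u y i) x (Pi.single j 1)
            + fderiv ℝ (fun y => u y j) x (Pi.single i 1)) / 2) * u x j)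
          * (crossProduct x e) i)
      + (∫ x : Fin 3 → ℝ,
          (∑ j, fderiv ℝ (fun y => u y j) x (Pi.single j 1))
            * (∑ i, u x i * (crossProduct x e) i)) = 0 := by
  -- names for the integrands
  set g₁ : (Fin 3 → ℝ) → ℝ := fun x => ∑ i,
      (∑ j, ((fderiv ℝ (fun y => u y i) x (Pi.single j 1)
          + fderiv ℝ (fun y => u y j) x (Pi.single i 1)) / 2) * u x j)
        * (crossProduct x e) i with hg₁
  set g₂ : (Fin 3 → ℝ) → ℝ := fun x =>
      (∑ j, fderiv ℝ (fun y => u y j) x (Pi.single j 1))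
        * (∑ i, u x i * (crossProduct x e) i) with hg₂
  have hcontA : ∀ i j, Continuous (fun x => fderiv ℝ (fun y => u y i) x (Pi.single j 1)) :=
    fun i j => ((u_comp_contDiff hu i).continuous_fderiv one_ne_zero).clm_apply continuous_const
  have hcontu : ∀ i, Continuous (fun x => u x i) := fun i => (u_comp_contDiff hu i).continuous
  have hcontφ : ∀ i, Continuous (fun x : Fin 3 → ℝ => crossProduct x e i) :=
    fun i => (hphi_contDiff e i).continuous
  have hzero : ∀ x, x ∉ tsupport u → u x = 0 := fun x hx => image_eq_zero_of_notMem_tsupport hx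
  have hg₁int : Integrable g₁ := by
    apply Continuous.integrable_of_hasCompactSupport
    · exact continuous_finset_sum _ fun i _ =>
        (continuous_finset_sum _ fun j _ =>
          (((hcontA i j).add (hcontA j i)).div_const 2).mul (hcontu j)).mul (hcontφ i)
    · apply HasCompactSupport.intro hus
      intro x hx
      simp [hg₁, hzero x hx]
  have hg₂int : Integrable g₂ := by
    apply Continuous.integrable_of_hasCompactSupport
    · exact (continuous_finset_sum _ fun j _ => hcontA j j).mul
        (continuous_finset_sum _ fun i _ => (hcontu i).mul (hcontφ i))
    · apply HasCompactSupport.intro hus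
      intro x hx
      simp [hg₂, hzero x hx]
  have key : (fun x => 2 * g₁ x + g₂ x)
      = fun x => ∑ j : Fin 3, fderiv ℝ (Ffun u e j) x (Pi.single j 1) :=
    funext fun x => pointwise_identity u e hu x
  calc 2 * (∫ x, g₁ x) + ∫ x, g₂ x
      = ∫ x, (2 * g₁ x + g₂ x) := by
        rw [integral_add (hg₁int.const_mul 2) hg₂int, integral_const_mul]
    _ = ∫ x, ∑ j : Fin 3, fderiv ℝ (Ffun u e j) x (Pi.single j 1) := by rw [key]
    _ = ∑ j : Fin 3, ∫ x, fderiv ℝ (Ffun u e j) x (Pi.single j 1) :=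
        integral_finset_sum _ fun j _ =>
          aux_integrable_fderiv _ (Ffun_contDiff e hu j) (Ffun_support e hus j) _
    _ = 0 := by
        rw [Finset.sum_eq_zero]
        intro j _
        exact aux_int_fderiv_zero _ (Ffun_contDiff e hu j) (Ffun_support e hus j) _
end

section
/- Let H be a real inner product space, ν > 0, Δt > 0, and suppose sequences u^n in H satisfy the discrete energy identity: for each n, (1/Δt)(‖[u^{n+1}; u^n]‖_G² − ‖[u^n; u^{n−1}]‖_G²) + (1/(4Δt))‖u^{n+1} − 2u^n + u^{n−1}‖_F² + ν a(F[u^{n+1}]) = L^n(F[u^{n+1}]) where a(v) ≥ 0 and |L^n(v)| ≤ f_n·√(a(v)) for some f_n ≥ 0. Then for all N, ‖[u^N; u^{N−1}]‖_G² + (νΔt/2)Σ_{n=1}^{N−1} a(F[u^{n+1}]) + (1/4)Σ_{n=1}^{N−1}‖u^{n+1} − 2u^n + u^{n−1}‖_F² ≤ ‖[u^1; u^0]‖_G² + (Δt/(2ν))Σ_{n=1}^{N−1} f_n². -/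
open Finset in
/-- abstract energy stability of the filtered scheme. With
`Gsq u v = (3/2)‖u‖² − (3/2)(u,v) + (1/2)‖v‖²`, `Fsq w = 3‖w‖²` and
`F[u^{n+1}] = (3/2)u^{n+1} − u^n + (1/2)u^{n−1}`, the per-step energy identity
together with the forcing bound yields the global energy estimate. -/
theorem stmt_15 {H : Type*} [NormedAddCommGroup H] [InnerProductSpace ℝ H]
    (ν Δt : ℝ) (hν : 0 < ν) (hΔt : 0 < Δt)
    (u : ℕ → H) (a : H → ℝ) (L : ℕ → H → ℝ) (f : ℕ → ℝ)
    (ha : ∀ v, 0 ≤ a v) (hf : ∀ n, 0 ≤ f n)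
    (hL : ∀ n v, |L n v| ≤ f n * Real.sqrt (a v))
    (hid : ∀ n : ℕ, 1 ≤ n →
      (1 / Δt) * (((3 / 2) * ‖u (n + 1)‖ ^ 2 - (3 / 2) * (inner ℝ (u (n + 1)) (u n) : ℝ)
            + (1 / 2) * ‖u n‖ ^ 2)
          - ((3 / 2) * ‖u n‖ ^ 2 - (3 / 2) * (inner ℝ (u n) (u (n - 1)) : ℝ)
            + (1 / 2) * ‖u (n - 1)‖ ^ 2))
        + (1 / (4 * Δt)) * (3 * ‖u (n + 1) - (2 : ℝ) • u n + u (n - 1)‖ ^ 2)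
        + ν * a ((3 / 2 : ℝ) • u (n + 1) - u n + (1 / 2 : ℝ) • u (n - 1))
      = L n ((3 / 2 : ℝ) • u (n + 1) - u n + (1 / 2 : ℝ) • u (n - 1))) :
    ∀ N : ℕ, 1 ≤ N →
      ((3 / 2) * ‖u N‖ ^ 2 - (3 / 2) * (inner ℝ (u N) (u (N - 1)) : ℝ)
          + (1 / 2) * ‖u (N - 1)‖ ^ 2)
        + (ν * Δt / 2) * ∑ n ∈ Icc 1 (N - 1),
            a ((3 / 2 : ℝ) • u (n + 1) - u n + (1 / 2 : ℝ) • u (n - 1))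
        + (1 / 4) * ∑ n ∈ Icc 1 (N - 1),
            (3 * ‖u (n + 1) - (2 : ℝ) • u n + u (n - 1)‖ ^ 2)
      ≤ ((3 / 2) * ‖u 1‖ ^ 2 - (3 / 2) * (inner ℝ (u 1) (u 0) : ℝ) + (1 / 2) * ‖u 0‖ ^ 2)
        + (Δt / (2 * ν)) * ∑ n ∈ Icc 1 (N - 1), f n ^ 2 := by
  set E : ℕ → ℝ := fun n =>
    (3 / 2) * ‖u n‖ ^ 2 - (3 / 2) * (inner ℝ (u n) (u (n - 1)) : ℝ)
      + (1 / 2) * ‖u (n - 1)‖ ^ 2 with hE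
  set A : ℕ → ℝ := fun n =>
    a ((3 / 2 : ℝ) • u (n + 1) - u n + (1 / 2 : ℝ) • u (n - 1)) with hA
  set S : ℕ → ℝ := fun n =>
    3 * ‖u (n + 1) - (2 : ℝ) • u n + u (n - 1)‖ ^ 2 with hS
  have hν' : ν ≠ 0 := ne_of_gt hν
  have hΔt' : Δt ≠ 0 := ne_of_gt hΔt
  have key : ∀ n : ℕ, 1 ≤ n →
      E (n + 1) + (ν * Δt / 2) * A n + (1 / 4) * S n
        ≤ E n + (Δt / (2 * ν)) * f n ^ 2 := by
    intro n hn
    have h := hid n hn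
    set v := (3 / 2 : ℝ) • u (n + 1) - u n + (1 / 2 : ℝ) • u (n - 1) with hv
    have hsq : Real.sqrt (a v) ^ 2 = a v := Real.sq_sqrt (ha v)
    have hs0 : 0 ≤ Real.sqrt (a v) := Real.sqrt_nonneg _
    have hLb : L n v ≤ ν / 2 * a v + 1 / (2 * ν) * f n ^ 2 := by
      have h1 : L n v ≤ f n * Real.sqrt (a v) := (abs_le.mp (hL n v)).2
      have h2 : ν / 2 * a v + 1 / (2 * ν) * f n ^ 2 - f n * Real.sqrt (a v)
          = (f n - ν * Real.sqrt (a v)) ^ 2 / (2 * ν) := by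
        field_simp; linear_combination (-ν ^ 2) * hsq
      have h3 : 0 ≤ (f n - ν * Real.sqrt (a v)) ^ 2 / (2 * ν) := by positivity
      linarith
    have hE1 : E (n + 1) =
        (3 / 2) * ‖u (n + 1)‖ ^ 2 - (3 / 2) * (inner ℝ (u (n + 1)) (u n) : ℝ)
          + (1 / 2) * ‖u n‖ ^ 2 := by simp [hE]
    have h' : E (n + 1) - E n + (1 / 4) * S n + ν * Δt * A n = Δt * L n v := by
      rw [hE1]; simp only [hE, hA, hS]
      rw [show (3 / 2 : ℝ) • u (n + 1) - u n + (1 / 2 : ℝ) • u (n - 1) = v from hv.symm]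
      have h8 := h
      field_simp at h8
      have h9 : Δt * (8 * ((3 / 2) * ‖u (n + 1)‖ ^ 2
            - (3 / 2) * (inner ℝ (u (n + 1)) (u n) : ℝ) + (1 / 2) * ‖u n‖ ^ 2
            - ((3 / 2) * ‖u n‖ ^ 2 - (3 / 2) * (inner ℝ (u n) (u (n - 1)) : ℝ)
              + (1 / 2) * ‖u (n - 1)‖ ^ 2))
          + 6 * ‖u (n + 1) - (2 : ℝ) • u n + u (n - 1)‖ ^ 2
          + 8 * Δt * (ν * a v))
          = Δt * (8 * Δt * L n v) := by linear_combination Δt * h8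
      have h10 := mul_left_cancel₀ hΔt' h9
      linarith [h10]
    have hb : Δt * L n v ≤ Δt * (ν / 2 * A n + 1 / (2 * ν) * f n ^ 2) := by
      have hAv : A n = a v := by simp [hA, hv]
      rw [hAv]
      exact mul_le_mul_of_nonneg_left hLb hΔt.le
    have heq : Δt * (ν / 2 * A n + 1 / (2 * ν) * f n ^ 2)
        = ν * Δt / 2 * A n + Δt / (2 * ν) * f n ^ 2 := by field_simp
    have hAnn : 0 ≤ ν * Δt * A n := by
      have : 0 ≤ A n := ha _
      positivity
    linarith [h', hb, heq.le, heq.ge, hAnn]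
  intro N hN
  induction N, hN using Nat.le_induction with
  | base => simp
  | succ N hN ih =>
    obtain ⟨M, rfl⟩ : ∃ M, N = M + 1 := ⟨N - 1, by omega⟩
    have hstep := key (M + 1) (by omega)
    have hsum : ∀ g : ℕ → ℝ, (Icc 1 (M + 1 + 1 - 1)).sum g
        = (Icc 1 (M + 1 - 1)).sum g + g (M + 1) := by
      intro g
      have h9 : M + 1 + 1 - 1 = (M + 1 - 1) + 1 := by omega
      rw [h9, Finset.sum_Icc_succ_top (by omega)]
      rw [show M + 1 - 1 + 1 = M + 1 from by omega]
    rw [hsum A, hsum S, hsum (fun n => f n ^ 2)]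
    have hEgoal : ((3 / 2) * ‖u (M + 1 + 1)‖ ^ 2
        - (3 / 2) * (inner ℝ (u (M + 1 + 1)) (u (M + 1 + 1 - 1)) : ℝ)
        + (1 / 2) * ‖u (M + 1 + 1 - 1)‖ ^ 2) = E (M + 1 + 1) := by simp [hE]
    have hEih : ((3 / 2) * ‖u (M + 1)‖ ^ 2
        - (3 / 2) * (inner ℝ (u (M + 1)) (u (M + 1 - 1)) : ℝ)
        + (1 / 2) * ‖u (M + 1 - 1)‖ ^ 2) = E (M + 1) := by simp [hE]
    rw [hEih] at ih
    rw [hEgoal]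
    linarith [hstep, ih]
end
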